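/- Let D = Dⁿ ∪ Dˣ be a database instance, Q a monotone Boolean query with ¬Q(∅), and t ∈ Dⁿ. Every s ∈ DF(D, Dⁿ, κ(Q), t) can be written as s = s′ ∪ {t} where s′ = s∖{t} satisfies D∖(s′∪{t}) ⊭ Q and D∖s′ ⊨ Q; in particular, t is an actual cause for Q with contingency set s∖{t}. -/
import Mathlib


/-- `t` is an actual cause for query `Q` in instance `D` with endogenous part `Dn`. -/
def IsCause {U : Type*} [DecidableEq U] (D Dn : Finset U) (Q : Finset U → Prop) (t : U) : Prop :=
  t ∈ Dn ∧ ∃ Γ ⊆ Dn, t ∉ Γ ∧ Q (D \ Γ) ∧ ¬ Q (D \ insert t Γ)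

/-- `D'` is an S-repair of `D` w.r.t. the denial constraint `κ(Q)`:
a subset of `D` not satisfying `Q`, maximal under inclusion among such subsets. -/
def IsSRepair {U : Type*} [DecidableEq U] (D : Finset U) (Q : Finset U → Prop)
    (D' : Finset U) : Prop :=
  D' ⊆ D ∧ ¬ Q D' ∧ ∀ D'' ⊆ D, ¬ Q D'' → D' ⊆ D'' → D'' = D'

/-- `DF(D, Dⁿ, κ(Q), t)`: differences `D ∖ D'` for S-repairs `D'` with `t ∈ D ∖ D' ⊆ Dⁿ`. -/
def DF {U : Type*} [DecidableEq U] (D Dn : Finset U) (Q : Finset U → Prop) (t : U) :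
    Set (Finset U) :=
  { s | ∃ D', IsSRepair D Q D' ∧ s = D \ D' ∧ t ∈ s ∧ s ⊆ Dn }

/-- Every `s ∈ DF(D, Dⁿ, κ(Q), t)` has the form `s' ∪ {t}` with `s' = s ∖ {t}` a
contingency set witnessing that `t` is an actual cause for `Q`. -/
theorem DF_gives_causes
    {U : Type*} [DecidableEq U] (D Dn Dx : Finset U) (Q : Finset U → Prop)
    (hD : D = Dn ∪ Dx) (hdisj : Disjoint Dn Dx)
    (hmono : ∀ S S' : Finset U, S ⊆ S' → Q S → Q S')
    (hempty : ¬ Q ∅)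
    (t : U) (ht : t ∈ Dn)
    (s : Finset U) (hs : s ∈ DF D Dn Q t) :
    s = insert t (s.erase t) ∧ s.erase t ⊆ Dn ∧ t ∉ s.erase t ∧
      Q (D \ s.erase t) ∧ ¬ Q (D \ insert t (s.erase t)) ∧ IsCause D Dn Q t := by
  obtain ⟨D', ⟨hsub, hnQ, hmax⟩, hseq, hts, hsDn⟩ := hs
  have htD : t ∈ D := (hseq ▸ hts |> Finset.mem_sdiff.mp).1
  have htD' : t ∉ D' := (hseq ▸ hts |> Finset.mem_sdiff.mp).2
  have h1 : s = insert t (s.erase t) := (Finset.insert_erase hts).symm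
  have herase : s.erase t ⊆ Dn := (Finset.erase_subset _ _).trans hsDn
  -- D \ insert t (s.erase t) = D \ s = D'
  have hset2 : D \ insert t (s.erase t) = D' := by
    rw [← h1, hseq, Finset.sdiff_sdiff_self_left, Finset.inter_eq_right.mpr hsub]
  -- D \ s.erase t = insert t D'
  have hset1 : D \ s.erase t = insert t D' := by
    ext x
    simp only [Finset.mem_sdiff, Finset.mem_erase, Finset.mem_insert, hseq]
    constructor
    · rintro ⟨hxD, hx⟩
      by_cases hxt : x = t
      · exact Or.inl hxt
      · right
        by_contra hxD'
        exact hx ⟨hxt, hxD, hxD'⟩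
    · rintro (rfl | hxD')
      · exact ⟨htD, fun h => h.1 rfl⟩
      · exact ⟨hsub hxD', fun h => h.2.2 hxD'⟩
  have hQ1 : Q (D \ s.erase t) := by
    rw [hset1]
    by_contra hq
    have := hmax (insert t D') (Finset.insert_subset htD hsub) hq
      (Finset.subset_insert _ _)
    exact htD' (this ▸ Finset.mem_insert_self t D')
  have hQ2 : ¬ Q (D \ insert t (s.erase t)) := by rw [hset2]; exact hnQ
  exact ⟨h1, herase, Finset.notMem_erase t s, hQ1, hQ2,
    ht, s.erase t, herase, Finset.notMem_erase t s, hQ1, hQ2⟩
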